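/- For any real matrices where the products are defined: if X = Q U + Q̃ Ũ with Qᵀ Q = I, then for any symmetric kernel K, ‖X K Xᵀ − Q U K Uᵀ Qᵀ‖ ≤ 2‖Ũ‖‖K‖(‖U‖ + ‖Ũ‖); in particular, truncating the component Q̃ Ũ with ‖Ũ‖ < τ changes X K Xᵀ by at most 2τ‖K‖(‖U‖ + τ) in spectral norm. -/

import Mathlib

open Matrix

open scoped Matrix.Norms.L2Operator

private lemma norm_transpose_real {a b : ℕ} (M : Matrix (Fin a) (Fin b) ℝ) :
    ‖Mᵀ‖ = ‖M‖ := by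
  rw [← Matrix.conjTranspose_eq_transpose_of_trivial, Matrix.l2_opNorm_conjTranspose]

private lemma norm_ortho_mul {N r p : ℕ} (Q : Matrix (Fin N) (Fin r) ℝ)
    (hQ : Qᵀ * Q = 1) (W : Matrix (Fin r) (Fin p) ℝ) : ‖Q * W‖ = ‖W‖ := by
  have h1 := Matrix.l2_opNorm_conjTranspose_mul_self (Q * W)
  have h2 := Matrix.l2_opNorm_conjTranspose_mul_self W
  rw [Matrix.conjTranspose_mul, Matrix.conjTranspose_eq_transpose_of_trivial Q,
    Matrix.mul_assoc, ← Matrix.mul_assoc Qᵀ, hQ, Matrix.one_mul, h2] at h1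
  nlinarith [norm_nonneg (Q * W), norm_nonneg W]

private lemma triple_bound {a b c d : ℕ}
    (A : Matrix (Fin a) (Fin b) ℝ) (B : Matrix (Fin b) (Fin c) ℝ)
    (C : Matrix (Fin c) (Fin d) ℝ) :
    ‖A * B * C‖ ≤ ‖A‖ * ‖B‖ * ‖C‖ := by
  calc ‖A * B * C‖ ≤ ‖A * B‖ * ‖C‖ := Matrix.l2_opNorm_mul _ _
    _ ≤ ‖A‖ * ‖B‖ * ‖C‖ :=
      mul_le_mul_of_nonneg_right (Matrix.l2_opNorm_mul _ _) (norm_nonneg _)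

/-- Error bound for the partial truncation and compression (PTC) step: discarding the
`Q̃ Ũ` component of `X = Q U + Q̃ Ũ` perturbs `X K Xᵀ` by at most
`2 ‖Ũ‖ ‖K‖ (‖U‖ + ‖Ũ‖)` in the spectral norm. -/
theorem ptc_error_bound {N r s m : ℕ}
    (X : Matrix (Fin N) (Fin m) ℝ)
    (Q : Matrix (Fin N) (Fin r) ℝ) (U : Matrix (Fin r) (Fin m) ℝ)
    (Qt : Matrix (Fin N) (Fin s) ℝ) (Ut : Matrix (Fin s) (Fin m) ℝ)
    (K : Matrix (Fin m) (Fin m) ℝ)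
    (hX : X = Q * U + Qt * Ut)
    (hQ : Qᵀ * Q = 1) (hQt : Qtᵀ * Qt = 1) (horth : Qᵀ * Qt = 0)
    (hK : K.IsSymm) :
    ‖X * K * Xᵀ - Q * U * K * Uᵀ * Qᵀ‖ ≤ 2 * ‖Ut‖ * ‖K‖ * (‖U‖ + ‖Ut‖) ∧
      ∀ τ : ℝ, ‖Ut‖ < τ →
        ‖X * K * Xᵀ - Q * U * K * Uᵀ * Qᵀ‖ ≤ 2 * τ * ‖K‖ * (‖U‖ + τ) := by
  have hUtQt : ‖Utᵀ * Qtᵀ‖ = ‖Ut‖ := by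
    rw [← Matrix.transpose_mul, norm_transpose_real, norm_ortho_mul Qt hQt]
  have hUQ : ‖Uᵀ * Qᵀ‖ = ‖U‖ := by
    rw [← Matrix.transpose_mul, norm_transpose_real, norm_ortho_mul Q hQ]
  have hA : ‖Q * (U * K * (Utᵀ * Qtᵀ))‖ ≤ ‖U‖ * ‖K‖ * ‖Ut‖ := by
    rw [norm_ortho_mul Q hQ, ← hUtQt]
    exact triple_bound U K (Utᵀ * Qtᵀ)
  have hB : ‖Qt * (Ut * K * (Uᵀ * Qᵀ))‖ ≤ ‖Ut‖ * ‖K‖ * ‖U‖ := by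
    rw [norm_ortho_mul Qt hQt, ← hUQ]
    exact triple_bound Ut K (Uᵀ * Qᵀ)
  have hC : ‖Qt * (Ut * K * (Utᵀ * Qtᵀ))‖ ≤ ‖Ut‖ * ‖K‖ * ‖Ut‖ := by
    rw [norm_ortho_mul Qt hQt]
    calc ‖Ut * K * (Utᵀ * Qtᵀ)‖ ≤ ‖Ut‖ * ‖K‖ * ‖Utᵀ * Qtᵀ‖ :=
          triple_bound Ut K (Utᵀ * Qtᵀ)
      _ = ‖Ut‖ * ‖K‖ * ‖Ut‖ := by rw [hUtQt]
  have hdecomp : X * K * Xᵀ - Q * U * K * Uᵀ * Qᵀ =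
      Q * (U * K * (Utᵀ * Qtᵀ)) + Qt * (Ut * K * (Uᵀ * Qᵀ)) + Qt * (Ut * K * (Utᵀ * Qtᵀ)) := by
    subst hX
    simp only [Matrix.transpose_add, Matrix.transpose_mul, Matrix.add_mul, Matrix.mul_add,
      Matrix.mul_assoc]
    abel
  have hmain : ‖X * K * Xᵀ - Q * U * K * Uᵀ * Qᵀ‖ ≤ 2 * ‖Ut‖ * ‖K‖ * (‖U‖ + ‖Ut‖) := by
    rw [hdecomp]
    calc ‖_ + _ + _‖ ≤ ‖Q * (U * K * (Utᵀ * Qtᵀ)) + Qt * (Ut * K * (Uᵀ * Qᵀ))‖ +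
          ‖Qt * (Ut * K * (Utᵀ * Qtᵀ))‖ := norm_add_le _ _
      _ ≤ ‖Q * (U * K * (Utᵀ * Qtᵀ))‖ + ‖Qt * (Ut * K * (Uᵀ * Qᵀ))‖ +
          ‖Qt * (Ut * K * (Utᵀ * Qtᵀ))‖ := by gcongr; exact norm_add_le _ _
      _ ≤ ‖U‖ * ‖K‖ * ‖Ut‖ + ‖Ut‖ * ‖K‖ * ‖U‖ + ‖Ut‖ * ‖K‖ * ‖Ut‖ :=
          add_le_add (add_le_add hA hB) hC
      _ ≤ 2 * ‖Ut‖ * ‖K‖ * (‖U‖ + ‖Ut‖) := by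
          nlinarith [mul_nonneg (mul_nonneg (norm_nonneg Ut) (norm_nonneg K)) (norm_nonneg Ut)]
  refine ⟨hmain, fun τ hτ => hmain.trans ?_⟩
  have hτ0 : (0:ℝ) ≤ τ := (norm_nonneg Ut).trans hτ.le
  nlinarith [norm_nonneg Ut, norm_nonneg K, norm_nonneg U,
    mul_nonneg (mul_nonneg (norm_nonneg K) (sub_nonneg.2 hτ.le)) (norm_nonneg U),
    mul_nonneg (mul_nonneg (norm_nonneg K) (sub_nonneg.2 hτ.le))
      (add_nonneg (norm_nonneg Ut) hτ0)]
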